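/- (Equivariance of adaptive phase selection probabilities.) Let f be any real-valued function on coarse-grid signals (functions ZMod n₁ × ZMod n₂ × ZMod n₃ → ℝ) that is invariant under all circular translations of the coarse grid, i.e., f(T_h Y) = f(Y) for every h and Y. Define the selection probabilities p(k | X) = exp(f(Ψ(X)_k)) / Σ_j exp(f(Ψ(X)_j)), the sum running over all phases j. Then for every volume X, all integers g = (g₁,g₂,g₃), and every phase k = (p,q,r), one has p(k ⊕ g | T_g X) = p(k | X), where k ⊕ g denotes the phase ((p+g₁) mod s₁, (q+g₂) mod s₂, (r+g₃) mod s₃). -/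
import Mathlib


noncomputable section

open scoped BigOperators

/-- The well-defined map `ZMod n → ZMod (n*s)` induced by `a ↦ s*a + p`. -/
def phaseEmb (n s : ℕ) (p : ℤ) (i : ZMod n) : ZMod (n * s) :=
  (s : ZMod (n * s)) * (i.val : ZMod (n * s)) + (p : ZMod (n * s))

/-- Circular translation of a volume by an integer vector `g`:
`(T_g X)(i,j,k) = X(i-g₁, j-g₂, k-g₃)`. -/
def Tvol {D H W : ℕ} (g : ℤ × ℤ × ℤ) (X : ZMod D × ZMod H × ZMod W → ℝ) :
    ZMod D × ZMod H × ZMod W → ℝ :=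
  fun v => X (v.1 - (g.1 : ZMod D), v.2.1 - (g.2.1 : ZMod H), v.2.2 - (g.2.2 : ZMod W))

/-- Circular translation on the coarse grid. -/
def Tcoarse {n₁ n₂ n₃ : ℕ} (h : ℤ × ℤ × ℤ) (Y : ZMod n₁ × ZMod n₂ × ZMod n₃ → ℝ) :
    ZMod n₁ × ZMod n₂ × ZMod n₃ → ℝ :=
  fun v => Y (v.1 - (h.1 : ZMod n₁), v.2.1 - (h.2.1 : ZMod n₂), v.2.2 - (h.2.2 : ZMod n₃))

/-- Polyphase component `Ψ(X)_{(p,q,r)}(i,j,k) = X(s₁·i+p, s₂·j+q, s₃·k+r)`,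
for a phase indexed by `Fin s₁ × Fin s₂ × Fin s₃`. -/
def Psi (s₁ s₂ s₃ n₁ n₂ n₃ : ℕ) (k : Fin s₁ × Fin s₂ × Fin s₃)
    (X : ZMod (n₁ * s₁) × ZMod (n₂ * s₂) × ZMod (n₃ * s₃) → ℝ) :
    ZMod n₁ × ZMod n₂ × ZMod n₃ → ℝ :=
  fun v => X (phaseEmb n₁ s₁ (k.1 : ℤ) v.1, phaseEmb n₂ s₂ (k.2.1 : ℤ) v.2.1,
              phaseEmb n₃ s₃ (k.2.2 : ℤ) v.2.2)

/-- Selection probabilities `p(k | X) = exp(f(Ψ(X)_k)) / Σ_j exp(f(Ψ(X)_j))`. -/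
noncomputable def selProb (s₁ s₂ s₃ n₁ n₂ n₃ : ℕ)
    (f : (ZMod n₁ × ZMod n₂ × ZMod n₃ → ℝ) → ℝ)
    (k : Fin s₁ × Fin s₂ × Fin s₃)
    (X : ZMod (n₁ * s₁) × ZMod (n₂ * s₂) × ZMod (n₃ * s₃) → ℝ) : ℝ :=
  Real.exp (f (Psi s₁ s₂ s₃ n₁ n₂ n₃ k X)) /
    ∑ j : Fin s₁ × Fin s₂ × Fin s₃, Real.exp (f (Psi s₁ s₂ s₃ n₁ n₂ n₃ j X))

/-- Shift of a phase component by an integer, modulo the patch size. -/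
def phAdd {s : ℕ} [NeZero s] (p : Fin s) (g : ℤ) : Fin s :=
  ⟨(((p : ℤ) + g) % (s : ℤ)).toNat, by
    have hs : (0 : ℤ) < (s : ℤ) := by
      exact_mod_cast Nat.pos_of_ne_zero (NeZero.ne s)
    have h1 := Int.emod_nonneg ((p : ℤ) + g) hs.ne'
    have h2 := Int.emod_lt_of_pos ((p : ℤ) + g) hs
    omega⟩

/-- Componentwise shift of a phase triple by an integer vector:
`k ⊕ g = ((p+g₁) mod s₁, (q+g₂) mod s₂, (r+g₃) mod s₃)`. -/
def phAdd3 {s₁ s₂ s₃ : ℕ} [NeZero s₁] [NeZero s₂] [NeZero s₃]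
    (k : Fin s₁ × Fin s₂ × Fin s₃) (g : ℤ × ℤ × ℤ) : Fin s₁ × Fin s₂ × Fin s₃ :=
  (phAdd k.1 g.1, phAdd k.2.1 g.2.1, phAdd k.2.2 g.2.2)


lemma phAdd_coe {s : ℕ} [NeZero s] (p : Fin s) (g : ℤ) :
    ((phAdd p g : Fin s) : ℤ) = ((p : ℤ) + g) % (s : ℤ) := by
  have hs : (0 : ℤ) < (s : ℤ) := by
    exact_mod_cast Nat.pos_of_ne_zero (NeZero.ne s)
  simp only [phAdd]
  exact Int.toNat_of_nonneg (Int.emod_nonneg _ hs.ne')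

lemma phAdd_phAdd {s : ℕ} [NeZero s] (p : Fin s) (g g' : ℤ) :
    phAdd (phAdd p g) g' = phAdd p (g + g') := by
  apply Fin.ext
  have : ((phAdd (phAdd p g) g' : Fin s) : ℤ) = ((phAdd p (g+g') : Fin s) : ℤ) := by
    rw [phAdd_coe, phAdd_coe, phAdd_coe, Int.add_emod ((((p:ℤ)+g) % s)) g',
      Int.emod_emod_of_dvd _ dvd_rfl, ← Int.add_emod, add_assoc]
  exact_mod_cast this

lemma phAdd_zero {s : ℕ} [NeZero s] (p : Fin s) : phAdd p 0 = p := by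
  apply Fin.ext
  have : ((phAdd p 0 : Fin s) : ℤ) = ((p : ℤ)) := by
    rw [phAdd_coe, add_zero]
    exact Int.emod_eq_of_lt (by positivity) (by exact_mod_cast p.isLt)
  exact_mod_cast this

/-- Shifting phases is an equivalence. -/
def phEquiv {s : ℕ} [NeZero s] (g : ℤ) : Fin s ≃ Fin s where
  toFun p := phAdd p g
  invFun p := phAdd p (-g)
  left_inv p := by show phAdd (phAdd p _) _ = p; rw [phAdd_phAdd, add_neg_cancel, phAdd_zero]
  right_inv p := by show phAdd (phAdd p _) _ = p; rw [phAdd_phAdd, neg_add_cancel, phAdd_zero]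

lemma smul_val_intCast (n s : ℕ) [NeZero n] (a : ℤ) :
    (s : ZMod (n*s)) * (((a : ZMod n)).val : ZMod (n*s)) = (s : ZMod (n*s)) * (a : ZMod (n*s)) := by
  have h : (((a : ZMod n)).val : ℤ) = a % n := ZMod.val_intCast a
  have h2 : ((((a : ZMod n)).val : ℤ) : ZMod (n*s)) = ((a % n : ℤ) : ZMod (n*s)) := by rw [h]
  push_cast at h2
  rw [h2]
  have hd : ((n*s : ℕ) : ℤ) ∣ (s * (a % n) - s * a) := by
    refine ⟨-(a/n), ?_⟩
    rw [Int.emod_def]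
    push_cast
    ring
  have := (ZMod.intCast_eq_intCast_iff' (s * (a % n)) (s * a) (n*s)).mpr
    (Int.ModEq.symm (Int.modEq_iff_dvd.mpr (by simpa using hd)))
  push_cast at this
  linear_combination this

lemma phaseEmb_intCast (n s : ℕ) [NeZero n] (p a : ℤ) :
    phaseEmb n s p ((a : ZMod n)) = (s : ZMod (n*s)) * (a : ZMod (n*s)) + (p : ZMod (n*s)) := by
  unfold phaseEmb
  rw [smul_val_intCast]

lemma emb_shift (n s : ℕ) [NeZero n] [NeZero s] (p g : ℤ) (i : ZMod n) :
    phaseEmb n s ((p + g) % s) i - (g : ZMod (n*s))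
      = phaseEmb n s p (i - (((p + g) / s : ℤ) : ZMod n)) := by
  obtain ⟨a, rfl⟩ : ∃ a : ℤ, (a : ZMod n) = i :=
    ⟨i.val, by push_cast; simp [ZMod.natCast_val, ZMod.cast_id]⟩
  rw [show (a : ZMod n) - (((p + g) / s : ℤ) : ZMod n) = ((a - (p+g)/s : ℤ) : ZMod n) by
    push_cast; ring]
  rw [phaseEmb_intCast, phaseEmb_intCast]
  have hmod : (((p+g) % s : ℤ) : ZMod (n*s))
      = ((p+g : ℤ) : ZMod (n*s)) - (s : ZMod (n*s)) * (((p+g)/s : ℤ) : ZMod (n*s)) := by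
    rw [Int.emod_def]; push_cast; ring
  rw [hmod]
  push_cast
  ring

lemma Psi_shift (s₁ s₂ s₃ n₁ n₂ n₃ : ℕ)
    [NeZero s₁] [NeZero s₂] [NeZero s₃] [NeZero n₁] [NeZero n₂] [NeZero n₃]
    (X : ZMod (n₁ * s₁) × ZMod (n₂ * s₂) × ZMod (n₃ * s₃) → ℝ)
    (g₁ g₂ g₃ : ℤ) (k : Fin s₁ × Fin s₂ × Fin s₃) :
    Psi s₁ s₂ s₃ n₁ n₂ n₃ (phAdd3 k (g₁, g₂, g₃)) (Tvol (g₁, g₂, g₃) X)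
      = Tcoarse (((k.1 : ℤ) + g₁) / s₁, ((k.2.1 : ℤ) + g₂) / s₂, ((k.2.2 : ℤ) + g₃) / s₃)
          (Psi s₁ s₂ s₃ n₁ n₂ n₃ k X) := by
  funext v
  simp only [Psi, Tvol, Tcoarse, phAdd3]
  refine congrArg X (Prod.ext ?_ (Prod.ext ?_ ?_)) <;>
    simp only [phAdd_coe, emb_shift]

/-- **Equivariance of adaptive phase selection probabilities.**
If the scoring functional `f` is invariant under all circular translations of the
coarse grid, then `p(k ⊕ g | T_g X) = p(k | X)` for every volume `X`, every
translation `g`, and every phase `k`. -/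
theorem selection_probability_equivariance
    (s₁ s₂ s₃ n₁ n₂ n₃ : ℕ)
    [NeZero s₁] [NeZero s₂] [NeZero s₃] [NeZero n₁] [NeZero n₂] [NeZero n₃]
    (f : (ZMod n₁ × ZMod n₂ × ZMod n₃ → ℝ) → ℝ)
    (hf : ∀ (h : ℤ × ℤ × ℤ) (Y : ZMod n₁ × ZMod n₂ × ZMod n₃ → ℝ),
      f (Tcoarse h Y) = f Y)
    (X : ZMod (n₁ * s₁) × ZMod (n₂ * s₂) × ZMod (n₃ * s₃) → ℝ)
    (g₁ g₂ g₃ : ℤ) (k : Fin s₁ × Fin s₂ × Fin s₃) :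
    selProb s₁ s₂ s₃ n₁ n₂ n₃ f (phAdd3 k (g₁, g₂, g₃)) (Tvol (g₁, g₂, g₃) X)
      = selProb s₁ s₂ s₃ n₁ n₂ n₃ f k X := by
  have key : ∀ j : Fin s₁ × Fin s₂ × Fin s₃,
      f (Psi s₁ s₂ s₃ n₁ n₂ n₃ (phAdd3 j (g₁, g₂, g₃)) (Tvol (g₁, g₂, g₃) X))
        = f (Psi s₁ s₂ s₃ n₁ n₂ n₃ j X) := by
    intro j
    rw [Psi_shift, hf]
  have hden :
      (∑ j : Fin s₁ × Fin s₂ × Fin s₃,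
        Real.exp (f (Psi s₁ s₂ s₃ n₁ n₂ n₃ j (Tvol (g₁, g₂, g₃) X))))
      = ∑ j : Fin s₁ × Fin s₂ × Fin s₃, Real.exp (f (Psi s₁ s₂ s₃ n₁ n₂ n₃ j X)) := by
    rw [← Equiv.sum_comp ((phEquiv g₁).prodCongr ((phEquiv g₂).prodCongr (phEquiv g₃)))
      (fun j => Real.exp (f (Psi s₁ s₂ s₃ n₁ n₂ n₃ j (Tvol (g₁, g₂, g₃) X))))]
    refine Finset.sum_congr rfl fun j _ => ?_
    have he : ((phEquiv g₁).prodCongr ((phEquiv g₂).prodCongr (phEquiv g₃))) j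
        = phAdd3 j (g₁, g₂, g₃) := rfl
    simp only [he, key]
  simp only [selProb, key, hden]
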